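/- For every prime power q, the cyclic group of order q² + q + 1 has difference size exactly q + 1, i.e., Δ[C_{q²+q+1}] = q + 1. -/

import Mathlib

set_option maxHeartbeats 1000000

/-- A finset `B` is a difference basis of the group `G` if every element of `G`
can be written as `a * b⁻¹` with `a b ∈ B`. -/
def IsDiffBasis {G : Type*} [Group G] (B : Finset G) : Prop :=
  ∀ g : G, ∃ a ∈ B, ∃ b ∈ B, g = a * b⁻¹

/-- The difference size `Δ[G]` of a group `G`: the smallest cardinality of a difference basis. -/
noncomputable def diffSize (G : Type*) [Group G] : ℕ :=
  sInf {k | ∃ B : Finset G, B.card = k ∧ IsDiffBasis B}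

/-- The difference characteristic `ð[G] = Δ[G]/√|G|`. -/
noncomputable def diffChar (G : Type*) [Group G] : ℝ :=
  (diffSize G : ℝ) / Real.sqrt (Nat.card G)

lemma isDiffBasis_image {G H : Type*} [Group G] [Group H] [DecidableEq H] (e : G ≃* H) (B : Finset G)
    (hB : IsDiffBasis B) : IsDiffBasis (B.image e) := by
  intro h
  obtain ⟨a, ha, b, hb, hab⟩ := hB (e.symm h)
  exact ⟨e a, Finset.mem_image_of_mem _ ha, e b, Finset.mem_image_of_mem _ hb,
    by rw [← map_inv, ← map_mul, ← hab, e.apply_symm_apply]⟩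

lemma diffSize_congr {G H : Type*} [Group G] [Group H] (e : G ≃* H) :
    diffSize G = diffSize H := by
  classical
  unfold diffSize
  congr 1
  ext k
  constructor
  · rintro ⟨B, rfl, hB⟩
    exact ⟨B.image e, by rw [Finset.card_image_of_injective _ e.injective],
      isDiffBasis_image e B hB⟩
  · rintro ⟨B, rfl, hB⟩
    exact ⟨B.image e.symm, by rw [Finset.card_image_of_injective _ e.symm.injective],
      isDiffBasis_image e.symm B hB⟩

lemma diff_lower {G : Type*} [Group G] [Fintype G] {B : Finset G} (hB : IsDiffBasis B) :
    Fintype.card G ≤ B.card * B.card := by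
  classical
  have hsurj : Set.SurjOn (fun p : G × G => p.1 * p.2⁻¹) ((B ×ˢ B : Finset (G × G)) : Set (G × G))
      ((Finset.univ : Finset G) : Set G) := by
    intro g _
    obtain ⟨a, ha, b, hb, hab⟩ := hB g
    exact ⟨(a, b), by simp [Finset.mem_product, ha, hb], hab.symm⟩
  calc Fintype.card G = (Finset.univ : Finset G).card := rfl
  _ ≤ (B ×ˢ B).card := Finset.card_le_card_of_surjOn _ hsurj
  _ = B.card * B.card := Finset.card_product _ _

/-- The main construction: in a field of order `q³` with a subfield of order `q`,
the quotient of units gives a difference basis of size `≤ q+1`. -/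
lemma main_construct {F : Type*} [Field F] [Fintype F] {q : ℕ} (hq2 : 2 ≤ q)
    (K : Subfield F) (hK : Nat.card ↥K = q) (hF : Fintype.card F = q ^ 3) :
    Nat.card (Fˣ ⧸ (Units.map (K.subtype : K →* F)).range) = q ^ 2 + q + 1 ∧
    ∃ B : Finset (Fˣ ⧸ (Units.map (K.subtype : K →* F)).range),
      B.card ≤ q + 1 ∧ IsDiffBasis B := by
  classical
  haveI : Fintype K := Fintype.ofFinite K
  haveI : Module.Finite K F := Module.Finite.of_finite
  have hKc : Fintype.card K = q := by rw [← Nat.card_eq_fintype_card, hK]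
  set f : Kˣ →* Fˣ := Units.map (K.subtype : K →* F) with hfdef
  set Hs : Subgroup Fˣ := f.range with hHs
  have hinjsub : Function.Injective (K.subtype : K →* F) := Subtype.coe_injective
  have hinjf : Function.Injective f := Units.map_injective hinjsub
  -- the dimension of F over K is 3
  have hd : Module.finrank K F = 3 := by
    have h1 : Fintype.card F = Fintype.card K ^ Module.finrank K F := Module.card_eq_pow_finrank
    rw [hF, hKc] at h1
    exact (Nat.pow_right_injective hq2 h1.symm)
  have b : Module.Basis (Fin 3) K F := Module.finBasisOfFinrankEq K F hd
  set v : Fin 2 → F := b ∘ Fin.castSucc with hvdef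
  have hlin : LinearIndependent K v := b.linearIndependent.comp _ (Fin.castSucc_injective 2)
  set V : Submodule K F := Submodule.span K (Set.range v) with hVdef
  have hV2 : Module.finrank K ↥V = 2 := by
    rw [hVdef, finrank_span_eq_card hlin, Fintype.card_fin]
  have hVcard : Fintype.card ↥V = q ^ 2 := by
    rw [Module.card_eq_pow_finrank (K := K) (V := ↥V), hKc, hV2]
  -- intersection property
  have hinter : ∀ y : Fˣ, ∃ x : F, x ≠ 0 ∧ x ∈ V ∧ ∃ w ∈ V, (y : F) * w = x := by
    intro y
    set W : Submodule K F := V.map (LinearMap.mulLeft K (y : F)) with hWdef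
    have hinj : Function.Injective (LinearMap.mulLeft K (y : F)) := by
      intro a c hac
      simp only [LinearMap.mulLeft_apply] at hac
      exact mul_left_cancel₀ y.ne_zero hac
    have hW2 : Module.finrank K ↥W = 2 := by
      rw [← hV2]
      exact (Submodule.equivMapOfInjective _ hinj V).finrank_eq.symm
    have hne : V ⊓ W ≠ ⊥ := by
      intro hbot
      have h4 := Submodule.finrank_sup_add_finrank_inf_eq V W
      rw [hbot, finrank_bot, hV2, hW2] at h4
      have hle : Module.finrank K ↥(V ⊔ W) ≤ Module.finrank K F := Submodule.finrank_le _
      rw [hd] at hle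
      omega
    obtain ⟨x, hxmem, hx0⟩ := (Submodule.ne_bot_iff _).mp hne
    obtain ⟨hxV, hxW⟩ := Submodule.mem_inf.mp hxmem
    obtain ⟨w, hwV, hwx⟩ := Submodule.mem_map.mp hxW
    exact ⟨x, hx0, hxV, w, hwV, hwx⟩
  set S : Finset Fˣ := Finset.univ.filter (fun x : Fˣ => (x : F) ∈ V) with hSdef
  set π : Fˣ →* Fˣ ⧸ Hs := QuotientGroup.mk' Hs with hπdef
  -- the difference basis property
  have hbasis : IsDiffBasis (S.image π) := by
    intro g
    obtain ⟨y, rfl⟩ := QuotientGroup.mk'_surjective Hs g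
    obtain ⟨x, hx0, hxV, w, hwV, hwx⟩ := hinter y
    have hw0 : w ≠ 0 := by
      rintro rfl
      rw [mul_zero] at hwx
      exact hx0 hwx.symm
    refine ⟨π (Units.mk0 x hx0), Finset.mem_image_of_mem _ (by simp [hSdef, hxV]),
      π (Units.mk0 w hw0), Finset.mem_image_of_mem _ (by simp [hSdef, hwV]), ?_⟩
    rw [← map_inv, ← map_mul]
    congr 1
    ext
    simp only [Units.val_mul, Units.val_inv_eq_inv_val, Units.val_mk0]
    exact (eq_mul_inv_iff_mul_eq₀ hw0).mpr hwx
  -- cardinality of S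
  have hScard : S.card = q ^ 2 - 1 := by
    have h0 : (0 : F) ∈ Finset.univ.filter (fun x : F => x ∈ V) := by simp [V.zero_mem]
    have hbij : S.card = ((Finset.univ.filter (fun x : F => x ∈ V)).erase 0).card := by
      refine Finset.card_bij (fun (x : Fˣ) (_ : x ∈ S) => (x : F)) ?_ ?_ ?_
      · intro a ha
        simp only [hSdef, Finset.mem_filter, Finset.mem_univ, true_and] at ha
        simp only [Finset.mem_erase, Finset.mem_filter, Finset.mem_univ, true_and]
        exact ⟨a.ne_zero, ha⟩
      · intro a _ c _ hac
        exact Units.ext hac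
      · intro x hx
        simp only [Finset.mem_erase, Finset.mem_filter, Finset.mem_univ, true_and] at hx
        exact ⟨Units.mk0 x hx.1, by simp [hSdef, hx.2], rfl⟩
    have hVfin : (Finset.univ.filter (fun x : F => x ∈ V)).card = q ^ 2 := by
      rw [← Fintype.card_subtype, ← hVcard]
    rw [hbij, Finset.card_erase_of_mem h0, hVfin]
  -- fibers of the quotient map on S are large
  have hfiber : ∀ a ∈ S.image π, q - 1 ≤ (S.filter (fun z => π z = a)).card := by
    intro a ha
    obtain ⟨x, hxS, rfl⟩ := Finset.mem_image.mp ha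
    have hxV : (x : F) ∈ V := by simpa [hSdef] using hxS
    have hmap : ∀ c : Kˣ, f c * x ∈ S.filter (fun z => π z = π x) := by
      intro c
      simp only [Finset.mem_filter, hSdef, Finset.mem_univ, true_and]
      constructor
      · have h1 : ((c : K)) • (x : F) ∈ V := V.smul_mem _ hxV
        have h2 : ((c : K)) • (x : F) = ((f c : Fˣ) : F) * (x : F) := by
          rw [Algebra.smul_def]
          congr 1
        rw [Units.val_mul, ← h2]
        exact h1
      · have hc : f c ∈ Hs := ⟨c, rfl⟩
        rw [map_mul]
        convert one_mul (π x) using 2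
        exact (QuotientGroup.eq_one_iff _).mpr hc
    have hcount : Fintype.card Kˣ ≤ (S.filter (fun z => π z = π x)).card := by
      have := Finset.card_le_card_of_injOn (s := (Finset.univ : Finset Kˣ)) (fun c : Kˣ => f c * x)
        (fun c _ => hmap c) (fun c1 _ c2 _ h => hinjf (mul_right_cancel h))
      simpa using this
    rw [Fintype.card_units, hKc] at hcount
    exact hcount
  have hBle : (S.image π).card ≤ q + 1 := by
    have h1 : (q - 1) * (S.image π).card ≤ S.card := Finset.mul_card_image_le_card S (q - 1) hfiber
    rw [hScard] at h1
    have h2 : q ^ 2 - 1 ≤ (q - 1) * (q + 1) := by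
      obtain ⟨m, rfl⟩ : ∃ m, q = m + 1 := ⟨q - 1, by omega⟩
      simp only [Nat.add_sub_cancel]
      rw [Nat.sub_le_iff_le_add]
      nlinarith
    exact Nat.le_of_mul_le_mul_left (h1.trans h2) (by omega)
  -- cardinality of the quotient
  have hQcard : Nat.card (Fˣ ⧸ Hs) = q ^ 2 + q + 1 := by
    have h1 : Nat.card Fˣ = Nat.card (Fˣ ⧸ Hs) * Nat.card Hs :=
      Subgroup.card_eq_card_quotient_mul_card_subgroup Hs
    have h2 : Nat.card Hs = q - 1 := by
      rw [← Nat.card_congr (MonoidHom.ofInjective hinjf).toEquiv]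
      rw [Nat.card_eq_fintype_card, Fintype.card_units, hKc]
    have h3 : Nat.card Fˣ = q ^ 3 - 1 := by
      rw [Nat.card_eq_fintype_card, Fintype.card_units, hF]
    rw [h3, h2] at h1
    have h4 : (q ^ 2 + q + 1) * (q - 1) = q ^ 3 - 1 := by
      obtain ⟨m, rfl⟩ : ∃ m, q = m + 1 := ⟨q - 1, by omega⟩
      simp only [Nat.add_sub_cancel]
      refine (Nat.eq_sub_of_add_eq ?_)
      ring
    rw [← h4] at h1
    exact Nat.eq_of_mul_eq_mul_right (by omega) h1.symm
  exact ⟨hQcard, S.image π, hBle, hbasis⟩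

lemma diffSize_eq_of {G : Type*} [Group G] [Finite G] {q : ℕ}
    (hcard : Nat.card G = q ^ 2 + q + 1) {B : Finset G} (hB : IsDiffBasis B)
    (hBle : B.card ≤ q + 1) : diffSize G = q + 1 := by
  classical
  haveI : Fintype G := Fintype.ofFinite G
  have hlow : ∀ m ∈ {k | ∃ B' : Finset G, B'.card = k ∧ IsDiffBasis B'}, q + 1 ≤ m := by
    rintro m ⟨B', rfl, hB'⟩
    have h1 := diff_lower hB'
    rw [← Nat.card_eq_fintype_card, hcard] at h1
    by_contra hcon
    push_neg at hcon
    have h2 : B'.card * B'.card ≤ q * q := Nat.mul_le_mul (by omega) (by omega)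
    nlinarith
  have hmem : B.card ∈ {k | ∃ B' : Finset G, B'.card = k ∧ IsDiffBasis B'} := ⟨B, rfl, hB⟩
  have h5 : diffSize G ≤ B.card := Nat.sInf_le hmem
  have h6 : q + 1 ≤ diffSize G := hlow _ (Nat.sInf_mem ⟨_, hmem⟩)
  omega

theorem stmt12 (q : ℕ) (hq : IsPrimePow q) :
    diffSize (Multiplicative (ZMod (q ^ 2 + q + 1))) = q + 1 := by
  classical
  obtain ⟨p, k, hp, hk, rfl⟩ := hq
  haveI : Fact p.Prime := ⟨hp.nat_prime⟩
  set q := p ^ k with hqdef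
  have hq2 : 2 ≤ q := Nat.one_lt_pow (by omega) hp.nat_prime.two_le
  set F := GaloisField p (3 * k) with hFdef
  have hcardF : Nat.card F = p ^ (3 * k) := GaloisField.card p (3 * k) (by omega)
  haveI : Finite F := Nat.finite_of_card_ne_zero (by rw [hcardF]; exact pow_ne_zero _ hp.nat_prime.pos.ne')
  haveI : Fintype F := Fintype.ofFinite F
  have hF3 : Fintype.card F = q ^ 3 := by
    rw [← Nat.card_eq_fintype_card, hcardF, hqdef, ← pow_mul, mul_comm]
  have hq0 : q ≠ 0 := by omega
  let K : Subfield F :=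
  { carrier := {x : F | x ^ q = x}
    mul_mem' := by
      intro a c ha hc
      simp only [Set.mem_setOf_eq] at *
      rw [mul_pow, ha, hc]
    one_mem' := by simp
    add_mem' := by
      intro a c ha hc
      simp only [Set.mem_setOf_eq, hqdef] at *
      rw [add_pow_char_pow, ha, hc]
    zero_mem' := by simp [Set.mem_setOf_eq, zero_pow hq0]
    neg_mem' := by
      intro a ha
      simp only [Set.mem_setOf_eq, hqdef] at *
      rw [show (-a : F) = 0 - a by ring, sub_pow_char_pow, ha,
        zero_pow (pow_ne_zero _ hp.nat_prime.pos.ne'), zero_sub]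
    inv_mem' := by
      intro a ha
      simp only [Set.mem_setOf_eq] at *
      rw [inv_pow, ha] }
  have hmemK : ∀ x : F, x ∈ K ↔ x ^ q = x := fun x => Iff.rfl
  have hKcard : Nat.card K = q := by
    have hdvd : q - 1 ∣ Fintype.card Fˣ := by
      rw [Fintype.card_units, hF3]
      simpa using Nat.sub_dvd_pow_sub_pow q 1 3
    obtain ⟨ζu, hζu⟩ : ∃ ζu : Fˣ, orderOf ζu = q - 1 := by
      have hcard := IsCyclic.card_orderOf_eq_totient (α := Fˣ) hdvd
      have hpos : 0 < (q - 1).totient := Nat.totient_pos.mpr (by omega)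
      rw [← hcard] at hpos
      obtain ⟨a, ha⟩ := Finset.card_pos.mp hpos
      exact ⟨a, (Finset.mem_filter.mp ha).2⟩
    have hprim : IsPrimitiveRoot ((ζu : F)) (q - 1) := by
      rw [IsPrimitiveRoot.coe_units_iff]
      exact hζu ▸ IsPrimitiveRoot.orderOf ζu
    have hset : (Finset.univ.filter fun x : F => x ^ q = x)
        = insert (0 : F) (Polynomial.nthRootsFinset (q - 1) (1 : F)) := by
      ext x
      simp only [Finset.mem_filter, Finset.mem_univ, true_and, Finset.mem_insert,
        Polynomial.mem_nthRootsFinset (show 0 < q - 1 by omega)]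
      constructor
      · intro h
        rcases eq_or_ne x 0 with rfl | hx
        · exact Or.inl rfl
        · refine Or.inr (mul_right_cancel₀ hx ?_)
          rw [one_mul, ← pow_succ, show q - 1 + 1 = q by omega]
          exact h
      · rintro (rfl | h)
        · exact zero_pow hq0
        · calc x ^ q = x ^ (q - 1) * x := by
                rw [← pow_succ, show q - 1 + 1 = q by omega]
          _ = x := by rw [h, one_mul]
    have h0 : (0 : F) ∉ Polynomial.nthRootsFinset (q - 1) (1 : F) :=
      fun h => Polynomial.ne_zero_of_mem_nthRootsFinset one_ne_zero h rfl
    haveI : Fintype K := Fintype.ofFinite K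
    rw [Nat.card_eq_fintype_card]
    have hc1 : Fintype.card K = (Finset.univ.filter fun x : F => x ^ q = x).card :=
      Fintype.card_of_subtype _ (fun x => by
        simp only [Finset.mem_filter, Finset.mem_univ, true_and]
        exact (hmemK x).symm)
    rw [hc1, hset, Finset.card_insert_of_notMem h0, hprim.card_nthRootsFinset]
    omega
  obtain ⟨hQcard, B, hBcard, hBbasis⟩ := main_construct hq2 K hKcard hF3
  haveI : IsCyclic (Fˣ ⧸ (Units.map (K.subtype : K →* F)).range) :=
    isCyclic_of_surjective _ (QuotientGroup.mk'_surjective _)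
  have e : Multiplicative (ZMod (q ^ 2 + q + 1))
      ≃* (Fˣ ⧸ (Units.map (K.subtype : K →* F)).range) := by
    have e0 := zmodCyclicMulEquiv
      (G := Fˣ ⧸ (Units.map (K.subtype : K →* F)).range) inferInstance
    rw [hQcard] at e0
    exact e0
  haveI : Finite (Fˣ ⧸ (Units.map (K.subtype : K →* F)).range) := Quotient.finite _
  rw [diffSize_congr e]
  exact diffSize_eq_of hQcard hBbasis hBcard
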